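/- The bilinear operation [·,·] on 𝒜 defined by [u,w] = x^{ε,0}( Σ_{s=1}^{n−1} x^{σ_{2s+1},0} (∂_{2s+1}(u)∂_{2s+2}(w) − ∂_{2s+1}(w)∂_{2s+2}(u)) + φ(α,β)·u·w ) + (∂₁+1)(u)·∂₂(w) − (∂₁+1)(w)·∂₂(u), for u ∈ 𝒜_α and w ∈ 𝒜_β, extended bilinearly, is antisymmetric and satisfies the Jacobi identity, so (𝒜, [·,·]) is a Lie algebra over F. -/

import Mathlib

open scoped BigOperators
namespace TwistedHamiltonian

def Jmon {n : ℕ} (J : Fin (2 * n + 2) → Bool) : AddSubmonoid (Fin (2 * n + 2) → ℕ) where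
  carrier := {i | ∀ p, J p = false → i p = 0}
  add_mem' := by
    intro a b ha hb p hp
    simp [ha p hp, hb p hp]
  zero_mem' := by
    intro p _
    rfl

structure Setup (F : Type*) [Field F] (Γ : Type*) [AddCommGroup Γ] (n : ℕ) where
  J : Fin (2 * n + 2) → Bool
  phi : Γ →+ Γ →+ F
  phiv : Fin (2 * n + 2) → Γ →+ F
  sg : Fin n → Γ
  eps : Γ

namespace Setup

variable {F : Type*} [Field F] {Γ : Type*} [AddCommGroup Γ] {n : ℕ}

abbrev A (S : Setup F Γ n) : Type _ :=
  AddMonoidAlgebra F (Γ × Jmon S.J)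

noncomputable def xx (S : Setup F Γ n) (α : Γ) (i : Jmon S.J) : S.A :=
  AddMonoidAlgebra.single (α, i) 1

def dec (S : Setup F Γ n) (p : Fin (2 * n + 2)) (i : Jmon S.J) : Jmon S.J :=
  ⟨Function.update (i : Fin (2 * n + 2) → ℕ) p ((i : Fin (2 * n + 2) → ℕ) p - 1), by
    intro q hq
    rcases eq_or_ne q p with rfl | h
    · have h0 : (i : Fin (2 * n + 2) → ℕ) q = 0 := i.2 q hq
      simp [h0]
    · rw [Function.update_of_ne h]
      exact i.2 q hq⟩

noncomputable def pd (S : Setup F Γ n) (p : Fin (2 * n + 2)) : S.A →ₗ[F] S.A :=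
  (Finsupp.lsum F fun a : Γ × Jmon S.J =>
    LinearMap.toSpanSingleton F S.A
      (S.phiv p a.1 • S.xx a.1 a.2 +
        (((a.2 : Fin (2 * n + 2) → ℕ) p : F)) • S.xx a.1 (S.dec p a.2))) ∘ₗ
    (AddMonoidAlgebra.coeffLinearEquiv F : S.A ≃ₗ[F] (Γ × Jmon S.J →₀ F)).toLinearMap

/-- The twisted Hamiltonian bracket of two basis elements. -/
noncomputable def brkBasis (S : Setup F Γ n) (a b : Γ × Jmon S.J) : S.A :=
  S.xx S.eps 0 *
      ((∑ t : Fin n,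
          S.xx (S.sg t) 0 *
            (S.pd ⟨2 * t.1 + 2, by have := t.isLt; omega⟩ (S.xx a.1 a.2) *
                S.pd ⟨2 * t.1 + 3, by have := t.isLt; omega⟩ (S.xx b.1 b.2) -
              S.pd ⟨2 * t.1 + 2, by have := t.isLt; omega⟩ (S.xx b.1 b.2) *
                S.pd ⟨2 * t.1 + 3, by have := t.isLt; omega⟩ (S.xx a.1 a.2))) +
        S.phi a.1 b.1 • (S.xx a.1 a.2 * S.xx b.1 b.2)) +
    ((S.pd ⟨0, by omega⟩ (S.xx a.1 a.2) + S.xx a.1 a.2) *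
        S.pd ⟨1, by omega⟩ (S.xx b.1 b.2) -
      (S.pd ⟨0, by omega⟩ (S.xx b.1 b.2) + S.xx b.1 b.2) *
        S.pd ⟨1, by omega⟩ (S.xx a.1 a.2))

/-- The twisted Hamiltonian bracket `[·,·]` on `𝒜`, as a bilinear map. -/
noncomputable def brk (S : Setup F Γ n) : S.A →ₗ[F] S.A →ₗ[F] S.A :=
  (Finsupp.lsum F fun a : Γ × Jmon S.J =>
    LinearMap.toSpanSingleton F (S.A →ₗ[F] S.A)
      ((Finsupp.lsum F fun b : Γ × Jmon S.J =>
        LinearMap.toSpanSingleton F S.A (S.brkBasis a b)) ∘ₗ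
        (AddMonoidAlgebra.coeffLinearEquiv F : S.A ≃ₗ[F] (Γ × Jmon S.J →₀ F)).toLinearMap)) ∘ₗ
    (AddMonoidAlgebra.coeffLinearEquiv F : S.A ≃ₗ[F] (Γ × Jmon S.J →₀ F)).toLinearMap

/-- The action of a basis element on a basis element in the module `𝒜_{ξ,f}`. -/
noncomputable def rhoBasis (S : Setup F Γ n) (ξ : Fin (2 * n + 2) → F) (f : Γ →+ F)
    (a b : Γ × Jmon S.J) : S.A :=
  S.xx S.eps 0 *
      ((∑ t : Fin n,
          S.xx (S.sg t) 0 *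
            (S.pd ⟨2 * t.1 + 2, by have := t.isLt; omega⟩ (S.xx a.1 a.2) *
                (S.pd ⟨2 * t.1 + 3, by have := t.isLt; omega⟩ (S.xx b.1 b.2) +
                  ξ ⟨2 * t.1 + 3, by have := t.isLt; omega⟩ • S.xx b.1 b.2) -
              S.pd ⟨2 * t.1 + 3, by have := t.isLt; omega⟩ (S.xx a.1 a.2) *
                (S.pd ⟨2 * t.1 + 2, by have := t.isLt; omega⟩ (S.xx b.1 b.2) +
                  ξ ⟨2 * t.1 + 2, by have := t.isLt; omega⟩ • S.xx b.1 b.2))) +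
        (S.phi a.1 b.1 + f a.1) • (S.xx a.1 a.2 * S.xx b.1 b.2)) +
    ((S.pd ⟨0, by omega⟩ (S.xx a.1 a.2) + S.xx a.1 a.2) *
        (S.pd ⟨1, by omega⟩ (S.xx b.1 b.2) + ξ ⟨1, by omega⟩ • S.xx b.1 b.2) -
      S.pd ⟨1, by omega⟩ (S.xx a.1 a.2) *
        (S.pd ⟨0, by omega⟩ (S.xx b.1 b.2) + ξ ⟨0, by omega⟩ • S.xx b.1 b.2))

/-- The action of `𝒜` on the module `𝒜_{ξ,f}`, as a bilinear map. -/
noncomputable def rho (S : Setup F Γ n) (ξ : Fin (2 * n + 2) → F) (f : Γ →+ F) :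
    S.A →ₗ[F] S.A →ₗ[F] S.A :=
  (Finsupp.lsum F fun a : Γ × Jmon S.J =>
    LinearMap.toSpanSingleton F (S.A →ₗ[F] S.A)
      ((Finsupp.lsum F fun b : Γ × Jmon S.J =>
        LinearMap.toSpanSingleton F S.A (S.rhoBasis ξ f a b)) ∘ₗ
        (AddMonoidAlgebra.coeffLinearEquiv F : S.A ≃ₗ[F] (Γ × Jmon S.J →₀ F)).toLinearMap)) ∘ₗ
    (AddMonoidAlgebra.coeffLinearEquiv F : S.A ≃ₗ[F] (Γ × Jmon S.J →₀ F)).toLinearMap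

/-- The span `F x^{-ε,0}` of the central element. -/
noncomputable def C (S : Setup F Γ n) : Submodule F S.A :=
  Submodule.span F {S.xx (-S.eps) 0}

/-- `σ = Σ_{s=1}^{n-1} σ_{2s+1} - 2ε`. -/
def sigmaEl (S : Setup F Γ n) : Γ :=
  (∑ t : Fin n, S.sg t) - 2 • S.eps

end Setup

namespace Setup

variable {F : Type*} [Field F] {Γ : Type*} [AddCommGroup Γ] {n : ℕ} (S : Setup F Γ n)

lemma xx_mul (α β : Γ) (i j : Jmon S.J) :
    S.xx α i * S.xx β j = S.xx (α + β) (i + j) := by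
  simp [xx, AddMonoidAlgebra.single_mul_single, Prod.mk_add_mk]

lemma xx_zero : S.xx 0 0 = 1 := rfl

lemma single_eq_smul_xx (a : Γ × Jmon S.J) (c : F) :
    AddMonoidAlgebra.single a c = c • S.xx a.1 a.2 := by
  simp [xx, AddMonoidAlgebra.smul_single]

lemma pd_single (p : Fin (2 * n + 2)) (a : Γ × Jmon S.J) (c : F) :
    S.pd p (AddMonoidAlgebra.single a c) =
      c • (S.phiv p a.1 • S.xx a.1 a.2 +
        (((a.2 : Fin (2 * n + 2) → ℕ) p : F)) • S.xx a.1 (S.dec p a.2)) := by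
  rw [pd, LinearMap.comp_apply, LinearEquiv.coe_coe, AddMonoidAlgebra.coeffLinearEquiv_apply, AddMonoidAlgebra.coeff_single, Finsupp.lsum_single, LinearMap.toSpanSingleton_apply]

lemma brk_single (a b : Γ × Jmon S.J) (c d : F) :
    S.brk (AddMonoidAlgebra.single a c) (AddMonoidAlgebra.single b d) = (c * d) • S.brkBasis a b := by
  rw [brk]
  rw [LinearMap.comp_apply, LinearEquiv.coe_coe, AddMonoidAlgebra.coeffLinearEquiv_apply, AddMonoidAlgebra.coeff_single, Finsupp.lsum_single, LinearMap.toSpanSingleton_apply, LinearMap.smul_apply,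
    LinearMap.comp_apply, LinearEquiv.coe_coe, AddMonoidAlgebra.coeffLinearEquiv_apply, AddMonoidAlgebra.coeff_single, Finsupp.lsum_single, LinearMap.toSpanSingleton_apply, smul_smul]

end Setup

namespace Setup

variable {F : Type*} [Field F] {Γ : Type*} [AddCommGroup Γ] {n : ℕ} (S : Setup F Γ n)

lemma induction2 {Q : S.A → S.A → Prop}
    (hs : ∀ a b (c d : F), Q (AddMonoidAlgebra.single a c) (AddMonoidAlgebra.single b d))
    (h0l : ∀ v, Q 0 v) (h0r : ∀ u, Q u 0)
    (haddl : ∀ u u' v, Q u v → Q u' v → Q (u + u') v)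
    (haddr : ∀ u v v', Q u v → Q u v' → Q u (v + v')) : ∀ u v, Q u v := by
  intro u v
  induction u using AddMonoidAlgebra.induction_linear with
  | zero => exact h0l v
  | add f g hf hg => exact haddl _ _ _ hf hg
  | single a c =>
    induction v using AddMonoidAlgebra.induction_linear with
    | zero => exact h0r _
    | add f g hf hg => exact haddr _ _ _ hf hg
    | single b d => exact hs a b c d

lemma coe_add (i j : Jmon S.J) (p : Fin (2 * n + 2)) :
    ((i + j : Jmon S.J) : Fin (2 * n + 2) → ℕ) p
      = (i : Fin (2 * n + 2) → ℕ) p + (j : Fin (2 * n + 2) → ℕ) p := rfl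

lemma dec_coe (p : Fin (2 * n + 2)) (i : Jmon S.J) :
    ((S.dec p i : Jmon S.J) : Fin (2 * n + 2) → ℕ)
      = Function.update (i : Fin (2 * n + 2) → ℕ) p ((i : Fin (2 * n + 2) → ℕ) p - 1) := rfl

lemma dec_add_left {p : Fin (2 * n + 2)} {i : Jmon S.J}
    (h : (i : Fin (2 * n + 2) → ℕ) p ≠ 0) (j : Jmon S.J) :
    S.dec p (i + j) = S.dec p i + j := by
  apply Subtype.ext
  rw [dec_coe, AddSubmonoid.coe_add, AddSubmonoid.coe_add, dec_coe]
  funext q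
  rcases eq_or_ne q p with rfl | hq
  · simp only [Function.update_self, Pi.add_apply, Function.update_self]
    omega
  · simp [Function.update_of_ne hq]

lemma dec_add_right {p : Fin (2 * n + 2)} {j : Jmon S.J}
    (h : (j : Fin (2 * n + 2) → ℕ) p ≠ 0) (i : Jmon S.J) :
    S.dec p (i + j) = i + S.dec p j := by
  apply Subtype.ext
  rw [dec_coe, AddSubmonoid.coe_add, AddSubmonoid.coe_add, dec_coe]
  funext q
  rcases eq_or_ne q p with rfl | hq
  · simp only [Function.update_self, Pi.add_apply, Function.update_self]
    omega
  · simp [Function.update_of_ne hq]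

lemma key (p : Fin (2 * n + 2)) (α : Γ) (i j : Jmon S.J) :
    (((i + j : Jmon S.J) : Fin (2 * n + 2) → ℕ) p : F) • S.xx α (S.dec p (i + j))
      = ((i : Fin (2 * n + 2) → ℕ) p : F) • S.xx α (S.dec p i + j)
        + ((j : Fin (2 * n + 2) → ℕ) p : F) • S.xx α (i + S.dec p j) := by
  rcases eq_or_ne ((i : Fin (2 * n + 2) → ℕ) p) 0 with hi | hi
  · rcases eq_or_ne ((j : Fin (2 * n + 2) → ℕ) p) 0 with hj | hj
    · simp [coe_add, hi, hj]
    · rw [S.dec_add_right hj i, coe_add, hi]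
      simp
  · rcases eq_or_ne ((j : Fin (2 * n + 2) → ℕ) p) 0 with hj | hj
    · rw [S.dec_add_left hi j, coe_add, hj]
      simp
    · have h2 : S.dec p i + j = i + S.dec p j := by
        apply Subtype.ext
        rw [AddSubmonoid.coe_add, AddSubmonoid.coe_add, dec_coe, dec_coe]
        funext q
        rcases eq_or_ne q p with rfl | hq
        · simp only [Pi.add_apply, Function.update_self]
          omega
        · simp [Function.update_of_ne hq]
      rw [S.dec_add_left hi j, coe_add, ← h2, Nat.cast_add, add_smul]

end Setup

namespace Setup

variable {F : Type*} [Field F] {Γ : Type*} [AddCommGroup Γ] {n : ℕ} (S : Setup F Γ n)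

lemma pd_xx (p : Fin (2 * n + 2)) (α : Γ) (i : Jmon S.J) :
    S.pd p (S.xx α i) = S.phiv p α • S.xx α i
      + (((i : Fin (2 * n + 2) → ℕ) p : F)) • S.xx α (S.dec p i) := by
  have h : S.pd p (S.xx α i) = _ := S.pd_single p (α, i) 1
  simpa using h

lemma dec_coe_ne {p q : Fin (2 * n + 2)} (h : p ≠ q) (i : Jmon S.J) :
    ((S.dec q i : Jmon S.J) : Fin (2 * n + 2) → ℕ) p = (i : Fin (2 * n + 2) → ℕ) p := by
  rw [dec_coe, Function.update_of_ne h]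

lemma dec_comm (p q : Fin (2 * n + 2)) (i : Jmon S.J) :
    S.dec p (S.dec q i) = S.dec q (S.dec p i) := by
  rcases eq_or_ne p q with rfl | hpq
  · rfl
  · apply Subtype.ext
    rw [dec_coe, dec_coe, dec_coe, dec_coe, Function.update_of_ne hpq,
      Function.update_of_ne hpq.symm, Function.update_comm hpq]

lemma pd_mul (p : Fin (2 * n + 2)) (u v : S.A) :
    S.pd p (u * v) = S.pd p u * v + u * S.pd p v := by
  induction u using AddMonoidAlgebra.induction_linear with
  | zero => simp
  | add f g hf hg =>
    rw [add_mul, map_add, hf, hg, map_add]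
    ring
  | single a c =>
    induction v using AddMonoidAlgebra.induction_linear with
    | zero => simp
    | add f g hf hg =>
      rw [mul_add, map_add, hf, hg, map_add]
      ring
    | single b d =>
      rw [AddMonoidAlgebra.single_mul_single]
      simp only [single_eq_smul_xx, map_smul, pd_xx, Prod.fst_add, Prod.snd_add, smul_add,
        add_mul, mul_add, smul_mul_assoc, mul_smul_comm, xx_mul, map_add, key,
        add_smul]
      module

lemma pd_comm (p q : Fin (2 * n + 2)) (u : S.A) :
    S.pd p (S.pd q u) = S.pd q (S.pd p u) := by
  rcases eq_or_ne p q with rfl | hpq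
  · rfl
  · induction u using AddMonoidAlgebra.induction_linear with
    | zero => simp
    | add f g hf hg => rw [map_add, map_add, hf, hg, map_add, map_add]
    | single a c =>
      simp only [pd_single, map_smul, smul_add, map_add, pd_xx, S.dec_coe_ne hpq,
        S.dec_coe_ne hpq.symm, S.dec_comm q p]
      module

end Setup

namespace Setup

variable {F : Type*} [Field F] {Γ : Type*} [AddCommGroup Γ] {n : ℕ} (S : Setup F Γ n)

noncomputable def PP (S : Setup F Γ n) : S.A →ₗ[F] S.A →ₗ[F] S.A :=
  (Finsupp.lsum F fun a : Γ × Jmon S.J =>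
    LinearMap.toSpanSingleton F (S.A →ₗ[F] S.A)
      ((Finsupp.lsum F fun b : Γ × Jmon S.J =>
        LinearMap.toSpanSingleton F S.A
          (S.phi a.1 b.1 • S.xx (a.1 + b.1) (a.2 + b.2))) ∘ₗ
        (AddMonoidAlgebra.coeffLinearEquiv F : S.A ≃ₗ[F] (Γ × Jmon S.J →₀ F)).toLinearMap)) ∘ₗ
    (AddMonoidAlgebra.coeffLinearEquiv F : S.A ≃ₗ[F] (Γ × Jmon S.J →₀ F)).toLinearMap

lemma PP_single (a b : Γ × Jmon S.J) (c d : F) :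
    S.PP (AddMonoidAlgebra.single a c) (AddMonoidAlgebra.single b d)
      = (c * d) • S.phi a.1 b.1 • S.xx (a.1 + b.1) (a.2 + b.2) := by
  rw [PP]
  rw [LinearMap.comp_apply, LinearEquiv.coe_coe, AddMonoidAlgebra.coeffLinearEquiv_apply, AddMonoidAlgebra.coeff_single, Finsupp.lsum_single, LinearMap.toSpanSingleton_apply, LinearMap.smul_apply,
    LinearMap.comp_apply, LinearEquiv.coe_coe, AddMonoidAlgebra.coeffLinearEquiv_apply, AddMonoidAlgebra.coeff_single, Finsupp.lsum_single, LinearMap.toSpanSingleton_apply, smul_smul]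

lemma PP_xx (α β : Γ) (i j : Jmon S.J) :
    S.PP (S.xx α i) (S.xx β j) = S.phi α β • (S.xx α i * S.xx β j) := by
  have : S.PP (S.xx α i) (S.xx β j) = _ := S.PP_single (α, i) (β, j) 1 1
  simpa [xx_mul] using this

lemma induction3 {Q : S.A → S.A → S.A → Prop}
    (hs : ∀ a b e (c d m : F),
      Q (AddMonoidAlgebra.single a c) (AddMonoidAlgebra.single b d) (AddMonoidAlgebra.single e m))
    (h01 : ∀ v w, Q 0 v w) (h02 : ∀ u w, Q u 0 w) (h03 : ∀ u v, Q u v 0)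
    (ha1 : ∀ u u' v w, Q u v w → Q u' v w → Q (u + u') v w)
    (ha2 : ∀ u v v' w, Q u v w → Q u v' w → Q u (v + v') w)
    (ha3 : ∀ u v w w', Q u v w → Q u v w' → Q u v (w + w')) : ∀ u v w, Q u v w := by
  intro u v w
  induction u using AddMonoidAlgebra.induction_linear with
  | zero => exact h01 v w
  | add f g hf hg => exact ha1 _ _ _ _ hf hg
  | single a c =>
    induction v using AddMonoidAlgebra.induction_linear with
    | zero => exact h02 _ w
    | add f g hf hg => exact ha2 _ _ _ _ hf hg
    | single b d =>
      induction w using AddMonoidAlgebra.induction_linear with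
      | zero => exact h03 _ _
      | add f g hf hg => exact ha3 _ _ _ _ hf hg
      | single e m => exact hs a b e c d m

lemma PP_skew (hskew : ∀ α β : Γ, S.phi α β = - S.phi β α) (u v : S.A) :
    S.PP u v = - S.PP v u := by
  refine S.induction2 (Q := fun u v => S.PP u v = - S.PP v u) ?_ ?_ ?_ ?_ ?_ u v
  · intro a b c d
    rw [PP_single, PP_single, hskew a.1 b.1, add_comm b.1 a.1, add_comm b.2 a.2]
    module
  · intro v; simp
  · intro u; simp
  · intro u u' v h h'; simp only [map_add, LinearMap.add_apply, h, h']; abel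
  · intro u v v' h h'; simp only [map_add, LinearMap.add_apply, h, h']; abel

lemma PP_pd (p : Fin (2 * n + 2)) (u v : S.A) :
    S.pd p (S.PP u v) = S.PP (S.pd p u) v + S.PP u (S.pd p v) := by
  refine S.induction2
    (Q := fun u v => S.pd p (S.PP u v) = S.PP (S.pd p u) v + S.PP u (S.pd p v)) ?_ ?_ ?_ ?_ ?_ u v
  · intro a b c d
    simp only [PP_single, single_eq_smul_xx, map_smul, LinearMap.smul_apply, pd_xx,
      map_add, LinearMap.add_apply, PP_xx, xx_mul, smul_add, key,
      AddMonoidHom.add_apply, add_smul]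
    module
  · intro v; simp
  · intro u; simp
  · intro u u' v h h'
    simp only [map_add, LinearMap.add_apply, h, h']; abel
  · intro u v v' h h'
    simp only [map_add, h, h']; abel

lemma PP_mul_left (u v w : S.A) :
    S.PP (u * v) w = u * S.PP v w + S.PP u w * v := by
  refine S.induction3
    (Q := fun u v w => S.PP (u * v) w = u * S.PP v w + S.PP u w * v) ?_ ?_ ?_ ?_ ?_ ?_ ?_ u v w
  · intro a b e c d m
    rw [AddMonoidAlgebra.single_mul_single]
    simp only [PP_single, single_eq_smul_xx, map_smul, LinearMap.smul_apply, PP_xx,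
      Prod.fst_add, Prod.snd_add, smul_mul_assoc, mul_smul_comm, map_add,
      AddMonoidHom.add_apply, add_smul, smul_add]
    simp only [← xx_mul]
    simp only [Algebra.smul_def, map_add, map_mul]
    ring
  · intro v w; simp
  · intro u w; simp
  · intro u v; simp
  · intro u u' v w h h'
    simp only [add_mul, mul_add, map_add, LinearMap.add_apply, h, h']; abel
  · intro u v v' w h h'
    simp only [add_mul, mul_add, map_add, LinearMap.add_apply, h, h']; abel
  · intro u v w w' h h'
    simp only [add_mul, mul_add, map_add, LinearMap.add_apply, h, h']; abel

lemma algska (hskew : ∀ α β : Γ, S.phi α β = - S.phi β α) (α β : Γ) :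
    algebraMap F S.A (S.phi α β) + algebraMap F S.A (S.phi β α) = 0 := by
  rw [hskew α β]
  simp

lemma PP_jac (hskew : ∀ α β : Γ, S.phi α β = - S.phi β α) (u v w : S.A) :
    S.PP (S.PP u v) w + S.PP (S.PP v w) u + S.PP (S.PP w u) v = 0 := by
  refine S.induction3
    (Q := fun u v w => S.PP (S.PP u v) w + S.PP (S.PP v w) u + S.PP (S.PP w u) v = 0)
    ?_ ?_ ?_ ?_ ?_ ?_ ?_ u v w
  · intro a b e c d m
    simp only [single_eq_smul_xx, map_smul, LinearMap.smul_apply, PP_xx, PP_mul_left,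
      smul_mul_assoc, mul_smul_comm, smul_add]
    simp only [Algebra.smul_def, map_mul]
    linear_combination (algebraMap F S.A c * algebraMap F S.A d * algebraMap F S.A m *
        algebraMap F S.A (S.phi b.1 e.1) *
        (S.xx a.1 a.2 * S.xx b.1 b.2 * S.xx e.1 e.2)) * S.algska hskew a.1 b.1
      + (algebraMap F S.A c * algebraMap F S.A d * algebraMap F S.A m *
        algebraMap F S.A (S.phi e.1 a.1) *
        (S.xx a.1 a.2 * S.xx b.1 b.2 * S.xx e.1 e.2)) * S.algska hskew b.1 e.1
      + (algebraMap F S.A c * algebraMap F S.A d * algebraMap F S.A m *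
        algebraMap F S.A (S.phi a.1 b.1) *
        (S.xx a.1 a.2 * S.xx b.1 b.2 * S.xx e.1 e.2)) * S.algska hskew a.1 e.1
  · intro v w; simp
  · intro u w; simp
  · intro u v; simp
  · intro u u' v w h h'
    simp only [map_add, LinearMap.add_apply, h, h']
    linear_combination h + h'
  · intro u v v' w h h'
    simp only [map_add, LinearMap.add_apply, h, h']
    linear_combination h + h'
  · intro u v w w' h h'
    simp only [map_add, LinearMap.add_apply, h, h']
    linear_combination h + h'

end Setup

namespace Setup

variable {F : Type*} [Field F] {Γ : Type*} [AddCommGroup Γ] {n : ℕ} (S : Setup F Γ n)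

def pidx1 {n : ℕ} (k : Option (Fin n)) : Fin (2 * n + 2) :=
  k.elim ⟨0, by omega⟩ fun t => ⟨2 * t.1 + 2, by have := t.isLt; omega⟩

def pidx2 {n : ℕ} (k : Option (Fin n)) : Fin (2 * n + 2) :=
  k.elim ⟨1, by omega⟩ fun t => ⟨2 * t.1 + 3, by have := t.isLt; omega⟩

def gam (S : Setup F Γ n) (k : Option (Fin n)) : Γ := k.elim (-S.eps) S.sg

@[simp] lemma pidx1_none : (pidx1 none : Fin (2 * n + 2)) = ⟨0, by omega⟩ := rfl
@[simp] lemma pidx2_none : (pidx2 none : Fin (2 * n + 2)) = ⟨1, by omega⟩ := rfl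
@[simp] lemma pidx1_some (t : Fin n) :
    pidx1 (some t) = (⟨2 * t.1 + 2, by have := t.isLt; omega⟩ : Fin (2 * n + 2)) := rfl
@[simp] lemma pidx2_some (t : Fin n) :
    pidx2 (some t) = (⟨2 * t.1 + 3, by have := t.isLt; omega⟩ : Fin (2 * n + 2)) := rfl
@[simp] lemma gam_none : S.gam none = -S.eps := rfl
@[simp] lemma gam_some (t : Fin n) : S.gam (some t) = S.sg t := rfl

/-- first-order part of the bracket -/
noncomputable def Wf (S : Setup F Γ n) (p q : Fin (2 * n + 2)) (f g : S.A) : S.A :=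
  S.pd p f * S.pd q g - S.pd q f * S.pd p g

/-- The conjugated bracket. -/
noncomputable def Mb (S : Setup F Γ n) (f g : S.A) : S.A :=
  (∑ k : Option (Fin n), S.xx (S.gam k) 0 * S.Wf (pidx1 k) (pidx2 k) f g) + S.PP f g

lemma pd_xx0 (p : Fin (2 * n + 2)) (γ : Γ) :
    S.pd p (S.xx γ 0) = S.phiv p γ • S.xx γ 0 := by
  simpa using S.pd_xx p γ 0

lemma pd_xx0_mul (p : Fin (2 * n + 2)) (γ : Γ) (u : S.A) :
    S.pd p (S.xx γ 0 * u) = S.phiv p γ • (S.xx γ 0 * u) + S.xx γ 0 * S.pd p u := by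
  rw [pd_mul, pd_xx0, smul_mul_assoc]

lemma PP_xx0_zero (γ : Γ) (hrad : ∀ β : Γ, S.phi γ β = 0) (v : S.A) :
    S.PP (S.xx γ 0) v = 0 := by
  induction v using AddMonoidAlgebra.induction_linear with
  | zero => simp
  | add f g hf hg => simp [hf, hg]
  | single b d =>
    have := S.PP_single (γ, 0) b 1 d
    simp only [xx] at this ⊢
    rw [this, hrad]
    simp

lemma PP_xx0_left (γ : Γ) (hrad : ∀ β : Γ, S.phi γ β = 0) (u v : S.A) :
    S.PP (S.xx γ 0 * u) v = S.xx γ 0 * S.PP u v := by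
  rw [PP_mul_left, PP_xx0_zero S γ hrad, zero_mul, add_zero]

lemma PP_xx0_right (γ : Γ) (hrad : ∀ β : Γ, S.phi γ β = 0)
    (hskew : ∀ α β : Γ, S.phi α β = - S.phi β α) (u v : S.A) :
    S.PP u (S.xx γ 0 * v) = S.xx γ 0 * S.PP u v := by
  rw [S.PP_skew hskew u, S.PP_xx0_left γ hrad, S.PP_skew hskew v u]
  simp

lemma xx_inv : S.xx (-S.eps) 0 * S.xx S.eps 0 = 1 := by
  rw [xx_mul, neg_add_cancel, add_zero, xx_zero]

lemma Mb_eps (hskew : ∀ α β : Γ, S.phi α β = - S.phi β α)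
    (hεrad : ∀ β : Γ, S.phi S.eps β = 0)
    (hεker : ∀ p : Fin (2 * n + 2), p.1 ≠ 0 → S.phiv p S.eps = 0)
    (hε1 : S.phiv ⟨0, by omega⟩ S.eps = 1) (u v : S.A) :
    S.xx (-S.eps) 0 * S.Mb (S.xx S.eps 0 * u) (S.xx S.eps 0 * v)
      = S.xx S.eps 0 *
          (∑ t : Fin n, S.xx (S.sg t) 0 * S.Wf (pidx1 (some t)) (pidx2 (some t)) u v)
        + ((S.pd (pidx1 none) u + u) * S.pd (pidx2 none) v
            - (S.pd (pidx1 none) v + v) * S.pd (pidx2 none) u)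
        + S.xx S.eps 0 * S.PP u v := by
  have hne : ∀ (p : Fin (2 * n + 2)), p.1 ≠ 0 →
      ∀ w : S.A, S.pd p (S.xx S.eps 0 * w) = S.xx S.eps 0 * S.pd p w := by
    intro p hp w
    rw [pd_xx0_mul, hεker p hp, zero_smul, zero_add]
  have h0 : ∀ w : S.A, S.pd (pidx1 none) (S.xx S.eps 0 * w)
      = S.xx S.eps 0 * (S.pd (pidx1 none) w + w) := by
    intro w
    rw [pidx1_none, pd_xx0_mul, hε1, one_smul, mul_add]
    ring
  have hPP : S.PP (S.xx S.eps 0 * u) (S.xx S.eps 0 * v)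
      = S.xx S.eps 0 * (S.xx S.eps 0 * S.PP u v) :=
    by rw [S.PP_xx0_left S.eps hεrad, S.PP_xx0_right S.eps hεrad hskew]
  have hinv := S.xx_inv
  rw [Mb, Fintype.sum_option]
  simp only [gam_none, gam_some]
  rw [hPP]
  have hWnone : S.Wf (pidx1 none) (pidx2 none) (S.xx S.eps 0 * u) (S.xx S.eps 0 * v)
      = (S.xx S.eps 0 * (S.pd (pidx1 none) u + u)) * (S.xx S.eps 0 * S.pd (pidx2 none) v)
        - (S.xx S.eps 0 * (S.pd (pidx1 none) v + v)) * (S.xx S.eps 0 * S.pd (pidx2 none) u) := by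
    rw [Wf, h0 u, h0 v, hne (pidx2 none) (by simp) u, hne (pidx2 none) (by simp) v]
    ring
  have hWsome : ∀ t : Fin n,
      S.Wf (pidx1 (some t)) (pidx2 (some t)) (S.xx S.eps 0 * u) (S.xx S.eps 0 * v)
      = (S.xx S.eps 0 * S.pd (pidx1 (some t)) u) * (S.xx S.eps 0 * S.pd (pidx2 (some t)) v)
        - (S.xx S.eps 0 * S.pd (pidx1 (some t)) v) * (S.xx S.eps 0 * S.pd (pidx2 (some t)) u) := by
    intro t
    rw [Wf, hne (pidx1 (some t)) (by simp) u, hne (pidx1 (some t)) (by simp) v,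
      hne (pidx2 (some t)) (by simp) u, hne (pidx2 (some t)) (by simp) v]
    ring
  rw [hWnone]
  rw [Finset.sum_congr rfl (fun t _ => by rw [hWsome t])]
  have hsum : (∑ t : Fin n, S.xx (S.sg t) 0 *
      (S.xx S.eps 0 * S.pd (pidx1 (some t)) u * (S.xx S.eps 0 * S.pd (pidx2 (some t)) v)
        - S.xx S.eps 0 * S.pd (pidx1 (some t)) v * (S.xx S.eps 0 * S.pd (pidx2 (some t)) u)))
      = S.xx S.eps 0 * (S.xx S.eps 0 *
          ∑ t : Fin n, S.xx (S.sg t) 0 * S.Wf (pidx1 (some t)) (pidx2 (some t)) u v) := by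
    rw [Finset.mul_sum, Finset.mul_sum]
    refine Finset.sum_congr rfl fun t _ => ?_
    rw [Wf]
    ring
  rw [hsum]
  linear_combination ((S.xx (-S.eps) 0 * S.xx S.eps 0 + 1) *
      ((S.pd (pidx1 none) u + u) * S.pd (pidx2 none) v
        - (S.pd (pidx1 none) v + v) * S.pd (pidx2 none) u)
    + S.xx S.eps 0 *
        (∑ t : Fin n, S.xx (S.sg t) 0 * S.Wf (pidx1 (some t)) (pidx2 (some t)) u v)
    + S.xx S.eps 0 * S.PP u v) * hinv

end Setup

namespace Setup

variable {F : Type*} [Field F] {Γ : Type*} [AddCommGroup Γ] {n : ℕ} (S : Setup F Γ n)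

lemma Mb_add_left (u u' v : S.A) : S.Mb (u + u') v = S.Mb u v + S.Mb u' v := by
  rw [Mb, Mb, Mb, map_add, LinearMap.add_apply]
  rw [Finset.sum_congr rfl (fun k _ => show
      S.xx (S.gam k) 0 * S.Wf (pidx1 k) (pidx2 k) (u + u') v
        = S.xx (S.gam k) 0 * S.Wf (pidx1 k) (pidx2 k) u v
          + S.xx (S.gam k) 0 * S.Wf (pidx1 k) (pidx2 k) u' v from by
    simp only [Wf, map_add, LinearMap.add_apply]
    ring)]
  rw [Finset.sum_add_distrib]
  abel

lemma Mb_add_right (u v v' : S.A) : S.Mb u (v + v') = S.Mb u v + S.Mb u v' := by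
  rw [Mb, Mb, Mb, map_add]
  rw [Finset.sum_congr rfl (fun k _ => show
      S.xx (S.gam k) 0 * S.Wf (pidx1 k) (pidx2 k) u (v + v')
        = S.xx (S.gam k) 0 * S.Wf (pidx1 k) (pidx2 k) u v
          + S.xx (S.gam k) 0 * S.Wf (pidx1 k) (pidx2 k) u v' from by
    simp only [Wf, map_add, LinearMap.add_apply]
    ring)]
  rw [Finset.sum_add_distrib]
  abel

lemma Mb_smul_left (c : F) (u v : S.A) : S.Mb (c • u) v = c • S.Mb u v := by
  rw [Mb, Mb, map_smul, LinearMap.smul_apply, smul_add, Finset.smul_sum]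
  rw [Finset.sum_congr rfl (fun k _ => show
      S.xx (S.gam k) 0 * S.Wf (pidx1 k) (pidx2 k) (c • u) v
        = c • (S.xx (S.gam k) 0 * S.Wf (pidx1 k) (pidx2 k) u v) from by
    simp only [Wf, map_smul]
    simp only [Algebra.smul_def]
    ring)]

lemma Mb_smul_right (c : F) (u v : S.A) : S.Mb u (c • v) = c • S.Mb u v := by
  rw [Mb, Mb, map_smul, smul_add, Finset.smul_sum]
  rw [Finset.sum_congr rfl (fun k _ => show
      S.xx (S.gam k) 0 * S.Wf (pidx1 k) (pidx2 k) u (c • v)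
        = c • (S.xx (S.gam k) 0 * S.Wf (pidx1 k) (pidx2 k) u v) from by
    simp only [Wf, map_smul]
    simp only [Algebra.smul_def]
    ring)]

lemma Mb_zero_left (v : S.A) : S.Mb 0 v = 0 := by
  simp [Mb, Wf]

lemma Mb_zero_right (u : S.A) : S.Mb u 0 = 0 := by
  simp [Mb, Wf]

end Setup

namespace Setup

variable {F : Type*} [Field F] {Γ : Type*} [AddCommGroup Γ] {n : ℕ} (S : Setup F Γ n)

set_option maxHeartbeats 1000000 in
lemma brkBasis_eq (hskew : ∀ α β : Γ, S.phi α β = - S.phi β α)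
    (hεrad : ∀ β : Γ, S.phi S.eps β = 0)
    (hεker : ∀ p : Fin (2 * n + 2), p.1 ≠ 0 → S.phiv p S.eps = 0)
    (hε1 : S.phiv ⟨0, by omega⟩ S.eps = 1) (a b : Γ × Jmon S.J) :
    S.brkBasis a b
      = S.xx (-S.eps) 0 *
          S.Mb (S.xx S.eps 0 * S.xx a.1 a.2) (S.xx S.eps 0 * S.xx b.1 b.2) := by
  rw [S.Mb_eps hskew hεrad hεker hε1, brkBasis, PP_xx, pidx1_none, pidx2_none, mul_add]
  simp only [Wf, pidx1_some, pidx2_some,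
    mul_comm (S.pd _ (S.xx b.1 b.2)) (S.pd _ (S.xx a.1 a.2))]
  abel

lemma brk_eq (hskew : ∀ α β : Γ, S.phi α β = - S.phi β α)
    (hεrad : ∀ β : Γ, S.phi S.eps β = 0)
    (hεker : ∀ p : Fin (2 * n + 2), p.1 ≠ 0 → S.phiv p S.eps = 0)
    (hε1 : S.phiv ⟨0, by omega⟩ S.eps = 1) (u w : S.A) :
    S.brk u w = S.xx (-S.eps) 0 * S.Mb (S.xx S.eps 0 * u) (S.xx S.eps 0 * w) := by
  refine S.induction2 (Q := fun u w =>
    S.brk u w = S.xx (-S.eps) 0 * S.Mb (S.xx S.eps 0 * u) (S.xx S.eps 0 * w))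
    ?_ ?_ ?_ ?_ ?_ u w
  · intro a b c d
    rw [brk_single, S.single_eq_smul_xx a c, S.single_eq_smul_xx b d,
      mul_smul_comm c, mul_smul_comm d, Mb_smul_left, Mb_smul_right,
      mul_smul_comm c, mul_smul_comm d, smul_smul,
      ← S.brkBasis_eq hskew hεrad hεker hε1 a b]
  · intro w; simp [Mb_zero_left]
  · intro u; simp [Mb_zero_right]
  · intro u u' w h h'
    rw [map_add, LinearMap.add_apply, h, h', mul_add, Mb_add_left, mul_add]
  · intro u w w' h h'
    rw [map_add, h, h', mul_add, Mb_add_right, mul_add]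

end Setup

namespace Setup

variable {F : Type*} [Field F] {Γ : Type*} [AddCommGroup Γ] {n : ℕ} (S : Setup F Γ n)

lemma Mb_skew (hskew : ∀ α β : Γ, S.phi α β = - S.phi β α) (f g : S.A) :
    S.Mb f g = - S.Mb g f := by
  rw [Mb, Mb, S.PP_skew hskew f g]
  rw [Finset.sum_congr rfl (fun k _ => show
      S.xx (S.gam k) 0 * S.Wf (pidx1 k) (pidx2 k) f g
        = -(S.xx (S.gam k) 0 * S.Wf (pidx1 k) (pidx2 k) g f) from by
    rw [Wf, Wf]
    ring)]
  rw [Finset.sum_neg_distrib]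
  abel

lemma gam_rad (hσrad : ∀ t : Fin n, ∀ β : Γ, S.phi (S.sg t) β = 0)
    (hεrad : ∀ β : Γ, S.phi S.eps β = 0) (k : Option (Fin n)) (β : Γ) :
    S.phi (S.gam k) β = 0 := by
  cases k with
  | none => simp [hεrad β]
  | some t => simpa using hσrad t β

lemma pidx_lemmas {m k : Option (Fin n)} (hmk : m ≠ k) :
    (pidx1 m).1 ≠ (pidx1 k).1 ∧ (pidx1 m).1 ≠ (pidx2 k).1 ∧
      (pidx2 m).1 ≠ (pidx1 k).1 ∧ (pidx2 m).1 ≠ (pidx2 k).1 := by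
  cases m with
  | none =>
    cases k with
    | none => exact absurd rfl hmk
    | some s => simp
  | some t =>
    cases k with
    | none => simp
    | some s =>
      have hts : t ≠ s := fun hh => hmk (by rw [hh])
      have : t.1 ≠ s.1 := fun hh => hts (Fin.ext hh)
      simp
      omega

lemma gam_ker (hσker : ∀ t : Fin n, ∀ p : Fin (2 * n + 2),
      p.1 ≠ 2 * t.1 + 2 → p.1 ≠ 2 * t.1 + 3 → S.phiv p (S.sg t) = 0)
    (hεker : ∀ p : Fin (2 * n + 2), p.1 ≠ 0 → S.phiv p S.eps = 0)
    (k : Option (Fin n)) (p : Fin (2 * n + 2))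
    (h1 : p.1 ≠ (pidx1 k).1) (h2 : p.1 ≠ (pidx2 k).1) :
    S.phiv p (S.gam k) = 0 := by
  cases k with
  | none =>
    rw [gam_none, map_neg, hεker p (by simpa using h1), neg_zero]
  | some t =>
    rw [gam_some]
    exact hσker t p (by simpa using h1) (by simpa using h2)

/-- second-order part -/
noncomputable def SOf (S : Setup F Γ n) (pa qa pb qb : Fin (2 * n + 2)) (f g h : S.A) : S.A :=
  S.pd pa (S.Wf pb qb f g) * S.pd qa h - S.pd qa (S.Wf pb qb f g) * S.pd pa h

lemma core (pa qa pb qb : Fin (2 * n + 2)) (f g h : S.A) :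
    (S.SOf pa qa pb qb f g h + S.SOf pa qa pb qb g h f + S.SOf pa qa pb qb h f g)
      + (S.SOf pb qb pa qa f g h + S.SOf pb qb pa qa g h f + S.SOf pb qb pa qa h f g) = 0 := by
  simp only [SOf, Wf, map_sub, pd_mul]
  simp only [S.pd_comm pb pa, S.pd_comm pb qa, S.pd_comm qb pa, S.pd_comm qb qa]
  ring

lemma cycW1 (p q : Fin (2 * n + 2)) (f g h : S.A) :
    S.Wf p q f g * S.pd p h + S.Wf p q g h * S.pd p f + S.Wf p q h f * S.pd p g = 0 := by
  simp only [Wf]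
  ring

lemma cycW2 (p q : Fin (2 * n + 2)) (f g h : S.A) :
    S.Wf p q f g * S.pd q h + S.Wf p q g h * S.pd q f + S.Wf p q h f * S.pd q g = 0 := by
  simp only [Wf]
  ring

lemma term2 (hskew : ∀ α β : Γ, S.phi α β = - S.phi β α) (p q : Fin (2 * n + 2)) (f g h : S.A) :
    (S.pd p (S.PP f g) * S.pd q h - S.pd q (S.PP f g) * S.pd p h + S.PP (S.Wf p q f g) h)
      + (S.pd p (S.PP g h) * S.pd q f - S.pd q (S.PP g h) * S.pd p f + S.PP (S.Wf p q g h) f)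
      + (S.pd p (S.PP h f) * S.pd q g - S.pd q (S.PP h f) * S.pd p g + S.PP (S.Wf p q h f) g)
      = 0 := by
  simp only [Wf, PP_pd, map_sub, LinearMap.sub_apply, PP_mul_left]
  rw [S.PP_skew hskew h (S.pd p f), S.PP_skew hskew h (S.pd q f),
    S.PP_skew hskew (S.pd p g) f, S.PP_skew hskew (S.pd q g) f,
    S.PP_skew hskew (S.pd p h) g, S.PP_skew hskew (S.pd q h) g]
  ring

end Setup

namespace Setup

variable {F : Type*} [Field F] {Γ : Type*} [AddCommGroup Γ] {n : ℕ} (S : Setup F Γ n)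

/-- twist part -/
noncomputable def TWf (S : Setup F Γ n) (pa qa : Fin (2 * n + 2)) (γ : Γ)
    (pb qb : Fin (2 * n + 2)) (f g h : S.A) : S.A :=
  S.phiv pa γ • (S.Wf pb qb f g * S.pd qa h) - S.phiv qa γ • (S.Wf pb qb f g * S.pd pa h)

/-- P-cross part -/
noncomputable def PTf (S : Setup F Γ n) (p q : Fin (2 * n + 2)) (f g h : S.A) : S.A :=
  S.pd p (S.PP f g) * S.pd q h - S.pd q (S.PP f g) * S.pd p h + S.PP (S.Wf p q f g) h

lemma pd_Mb (r : Fin (2 * n + 2)) (f g : S.A) :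
    S.pd r (S.Mb f g)
      = (∑ k : Option (Fin n),
          (S.phiv r (S.gam k) • (S.xx (S.gam k) 0 * S.Wf (pidx1 k) (pidx2 k) f g)
            + S.xx (S.gam k) 0 * S.pd r (S.Wf (pidx1 k) (pidx2 k) f g)))
        + (S.PP (S.pd r f) g + S.PP f (S.pd r g)) := by
  rw [Mb, map_add, map_sum, PP_pd]
  rw [Finset.sum_congr rfl (fun k _ => S.pd_xx0_mul r (S.gam k) _)]

lemma PP_Mb_left (hσrad : ∀ t : Fin n, ∀ β : Γ, S.phi (S.sg t) β = 0)
    (hεrad : ∀ β : Γ, S.phi S.eps β = 0) (f g h : S.A) :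
    S.PP (S.Mb f g) h
      = (∑ k : Option (Fin n),
          S.xx (S.gam k) 0 * S.PP (S.Wf (pidx1 k) (pidx2 k) f g) h)
        + S.PP (S.PP f g) h := by
  rw [Mb, map_add, LinearMap.add_apply, map_sum, LinearMap.sum_apply]
  congr 1
  refine Finset.sum_congr rfl fun k _ => ?_
  exact S.PP_xx0_left (S.gam k) (S.gam_rad hσrad hεrad k) _ h

lemma Mterm (m : Option (Fin n)) (f g h : S.A) :
    S.xx (S.gam m) 0 * S.Wf (pidx1 m) (pidx2 m) (S.Mb f g) h
      = (∑ k : Option (Fin n), S.xx (S.gam m) 0 * (S.xx (S.gam k) 0 *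
          (S.SOf (pidx1 m) (pidx2 m) (pidx1 k) (pidx2 k) f g h
            + S.TWf (pidx1 m) (pidx2 m) (S.gam k) (pidx1 k) (pidx2 k) f g h)))
        + S.xx (S.gam m) 0 * (S.pd (pidx1 m) (S.PP f g) * S.pd (pidx2 m) h
            - S.pd (pidx2 m) (S.PP f g) * S.pd (pidx1 m) h) := by
  rw [Wf, pd_Mb, pd_Mb, PP_pd, PP_pd]
  have hsum : (∑ k : Option (Fin n), S.xx (S.gam m) 0 * (S.xx (S.gam k) 0 *
          (S.SOf (pidx1 m) (pidx2 m) (pidx1 k) (pidx2 k) f g h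
            + S.TWf (pidx1 m) (pidx2 m) (S.gam k) (pidx1 k) (pidx2 k) f g h)))
      = S.xx (S.gam m) 0 *
          ((∑ k : Option (Fin n),
            (S.phiv (pidx1 m) (S.gam k) • (S.xx (S.gam k) 0 * S.Wf (pidx1 k) (pidx2 k) f g)
              + S.xx (S.gam k) 0 * S.pd (pidx1 m) (S.Wf (pidx1 k) (pidx2 k) f g)))
              * S.pd (pidx2 m) h
          - (∑ k : Option (Fin n),
            (S.phiv (pidx2 m) (S.gam k) • (S.xx (S.gam k) 0 * S.Wf (pidx1 k) (pidx2 k) f g)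
              + S.xx (S.gam k) 0 * S.pd (pidx2 m) (S.Wf (pidx1 k) (pidx2 k) f g)))
              * S.pd (pidx1 m) h) := by
    rw [Finset.sum_mul, Finset.sum_mul, ← Finset.sum_sub_distrib, Finset.mul_sum]
    refine Finset.sum_congr rfl fun k _ => ?_
    simp only [SOf, TWf, Algebra.smul_def]
    ring
  rw [hsum]
  ring

lemma Mb_expand (hσrad : ∀ t : Fin n, ∀ β : Γ, S.phi (S.sg t) β = 0)
    (hεrad : ∀ β : Γ, S.phi S.eps β = 0) (f g h : S.A) :
    S.Mb (S.Mb f g) h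
      = (∑ m : Option (Fin n), ∑ k : Option (Fin n),
          S.xx (S.gam m) 0 * (S.xx (S.gam k) 0 *
            (S.SOf (pidx1 m) (pidx2 m) (pidx1 k) (pidx2 k) f g h
              + S.TWf (pidx1 m) (pidx2 m) (S.gam k) (pidx1 k) (pidx2 k) f g h)))
        + (∑ m : Option (Fin n),
            S.xx (S.gam m) 0 * S.PTf (pidx1 m) (pidx2 m) f g h)
        + S.PP (S.PP f g) h := by
  rw [Mb]
  rw [S.PP_Mb_left hσrad hεrad]
  rw [Finset.sum_congr rfl (fun m _ => S.Mterm m f g h)]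
  rw [Finset.sum_add_distrib]
  have hPT : (∑ m : Option (Fin n), S.xx (S.gam m) 0 * S.PTf (pidx1 m) (pidx2 m) f g h)
      = (∑ m : Option (Fin n), S.xx (S.gam m) 0 *
          (S.pd (pidx1 m) (S.PP f g) * S.pd (pidx2 m) h
            - S.pd (pidx2 m) (S.PP f g) * S.pd (pidx1 m) h))
        + (∑ m : Option (Fin n),
            S.xx (S.gam m) 0 * S.PP (S.Wf (pidx1 m) (pidx2 m) f g) h) := by
    rw [← Finset.sum_add_distrib]
    refine Finset.sum_congr rfl fun m _ => ?_
    rw [PTf, mul_add, mul_sub]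
  rw [hPT]
  abel

end Setup

namespace Setup

variable {F : Type*} [Field F] {Γ : Type*} [AddCommGroup Γ] {n : ℕ} (S : Setup F Γ n)

lemma Mb_jac [CharZero F]
    (hskew : ∀ α β : Γ, S.phi α β = - S.phi β α)
    (hσrad : ∀ t : Fin n, ∀ β : Γ, S.phi (S.sg t) β = 0)
    (hσker : ∀ t : Fin n, ∀ p : Fin (2 * n + 2),
      p.1 ≠ 2 * t.1 + 2 → p.1 ≠ 2 * t.1 + 3 → S.phiv p (S.sg t) = 0)
    (hεrad : ∀ β : Γ, S.phi S.eps β = 0)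
    (hεker : ∀ p : Fin (2 * n + 2), p.1 ≠ 0 → S.phiv p S.eps = 0)
    (f g h : S.A) :
    S.Mb (S.Mb f g) h + S.Mb (S.Mb g h) f + S.Mb (S.Mb h f) g = 0 := by
  -- twist part vanishes cyclically for every pair of indices
  have hTW : ∀ m k : Option (Fin n),
      S.TWf (pidx1 m) (pidx2 m) (S.gam k) (pidx1 k) (pidx2 k) f g h
        + S.TWf (pidx1 m) (pidx2 m) (S.gam k) (pidx1 k) (pidx2 k) g h f
        + S.TWf (pidx1 m) (pidx2 m) (S.gam k) (pidx1 k) (pidx2 k) h f g = 0 := by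
    intro m k
    rcases eq_or_ne m k with rfl | hmk
    · have c1 := S.cycW1 (pidx1 m) (pidx2 m) f g h
      have c2 := S.cycW2 (pidx1 m) (pidx2 m) f g h
      simp only [TWf, Algebra.smul_def]
      linear_combination (algebraMap F S.A (S.phiv (pidx1 m) (S.gam m))) * c2
        - (algebraMap F S.A (S.phiv (pidx2 m) (S.gam m))) * c1
    · have k1 : S.phiv (pidx1 m) (S.gam k) = 0 :=
        S.gam_ker hσker hεker k (pidx1 m) (pidx_lemmas hmk).1 (pidx_lemmas hmk).2.1
      have k2 : S.phiv (pidx2 m) (S.gam k) = 0 :=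
        S.gam_ker hσker hεker k (pidx2 m) (pidx_lemmas hmk).2.2.1 (pidx_lemmas hmk).2.2.2
      simp [TWf, k1, k2]
  -- the combined second-order + twist double sums
  set E : Option (Fin n) → Option (Fin n) → S.A := fun m k =>
    S.xx (S.gam m) 0 * (S.xx (S.gam k) 0 *
        (S.SOf (pidx1 m) (pidx2 m) (pidx1 k) (pidx2 k) f g h
          + S.TWf (pidx1 m) (pidx2 m) (S.gam k) (pidx1 k) (pidx2 k) f g h))
      + S.xx (S.gam m) 0 * (S.xx (S.gam k) 0 *
        (S.SOf (pidx1 m) (pidx2 m) (pidx1 k) (pidx2 k) g h f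
          + S.TWf (pidx1 m) (pidx2 m) (S.gam k) (pidx1 k) (pidx2 k) g h f))
      + S.xx (S.gam m) 0 * (S.xx (S.gam k) 0 *
        (S.SOf (pidx1 m) (pidx2 m) (pidx1 k) (pidx2 k) h f g
          + S.TWf (pidx1 m) (pidx2 m) (S.gam k) (pidx1 k) (pidx2 k) h f g)) with hEdef
  have hE : ∀ m k : Option (Fin n), E m k + E k m = 0 := by
    intro m k
    have hcore := S.core (pidx1 m) (pidx2 m) (pidx1 k) (pidx2 k) f g h
    have hTm := hTW m k
    have hTk := hTW k m
    simp only [hEdef]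
    linear_combination (S.xx (S.gam m) 0 * S.xx (S.gam k) 0) * hcore
      + (S.xx (S.gam m) 0 * S.xx (S.gam k) 0) * hTm
      + (S.xx (S.gam k) 0 * S.xx (S.gam m) 0) * hTk
  have hMain : (∑ m : Option (Fin n), ∑ k : Option (Fin n), E m k) = 0 := by
    have hswap : (∑ m : Option (Fin n), ∑ k : Option (Fin n), E m k)
        = ∑ m : Option (Fin n), ∑ k : Option (Fin n), E k m := Finset.sum_comm
    have h2 : (∑ m : Option (Fin n), ∑ k : Option (Fin n), E m k)
        + (∑ m : Option (Fin n), ∑ k : Option (Fin n), E m k) = 0 := by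
      nth_rewrite 2 [hswap]
      rw [← Finset.sum_add_distrib]
      refine Finset.sum_eq_zero fun m _ => ?_
      rw [← Finset.sum_add_distrib]
      exact Finset.sum_eq_zero fun k _ => hE m k
    have h3 : (2 : F) • (∑ m : Option (Fin n), ∑ k : Option (Fin n), E m k) = 0 := by
      rw [two_smul]
      exact h2
    exact (smul_eq_zero.mp h3).resolve_left two_ne_zero
  -- the P-cross sums
  have hG3 : (∑ m : Option (Fin n), S.xx (S.gam m) 0 * S.PTf (pidx1 m) (pidx2 m) f g h)
      + (∑ m : Option (Fin n), S.xx (S.gam m) 0 * S.PTf (pidx1 m) (pidx2 m) g h f)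
      + (∑ m : Option (Fin n), S.xx (S.gam m) 0 * S.PTf (pidx1 m) (pidx2 m) h f g) = 0 := by
    rw [← Finset.sum_add_distrib, ← Finset.sum_add_distrib]
    refine Finset.sum_eq_zero fun m _ => ?_
    have h2 := S.term2 hskew (pidx1 m) (pidx2 m) f g h
    simp only [PTf]
    rw [← mul_add, ← mul_add, h2, mul_zero]
  have hG4 := S.PP_jac hskew f g h
  rw [S.Mb_expand hσrad hεrad f g h, S.Mb_expand hσrad hεrad g h f,
    S.Mb_expand hσrad hεrad h f g]
  have hMain' : (∑ m : Option (Fin n), ∑ k : Option (Fin n),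
        S.xx (S.gam m) 0 * (S.xx (S.gam k) 0 *
          (S.SOf (pidx1 m) (pidx2 m) (pidx1 k) (pidx2 k) f g h
            + S.TWf (pidx1 m) (pidx2 m) (S.gam k) (pidx1 k) (pidx2 k) f g h)))
      + (∑ m : Option (Fin n), ∑ k : Option (Fin n),
        S.xx (S.gam m) 0 * (S.xx (S.gam k) 0 *
          (S.SOf (pidx1 m) (pidx2 m) (pidx1 k) (pidx2 k) g h f
            + S.TWf (pidx1 m) (pidx2 m) (S.gam k) (pidx1 k) (pidx2 k) g h f)))
      + (∑ m : Option (Fin n), ∑ k : Option (Fin n),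
        S.xx (S.gam m) 0 * (S.xx (S.gam k) 0 *
          (S.SOf (pidx1 m) (pidx2 m) (pidx1 k) (pidx2 k) h f g
            + S.TWf (pidx1 m) (pidx2 m) (S.gam k) (pidx1 k) (pidx2 k) h f g))) = 0 := by
    rw [← hMain]
    rw [← Finset.sum_add_distrib, ← Finset.sum_add_distrib]
    refine Finset.sum_congr rfl fun m _ => ?_
    rw [← Finset.sum_add_distrib, ← Finset.sum_add_distrib]
  linear_combination hMain' + hG3 + hG4

end Setup

/-- The bilinear operation `[·,·]` defined on basis elements
by (1.8) of the paper is antisymmetric and satisfies the Jacobi identity, so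
`(𝒜, [·,·])` is a Lie algebra over `F`. -/
theorem brk_is_lie_bracket
    {F : Type*} [Field F] [CharZero F] {Γ : Type*} [AddCommGroup Γ] [Nontrivial Γ]
    [NoZeroSMulDivisors ℤ Γ] {n : ℕ} (S : Setup F Γ n)
    (hskew : ∀ α β : Γ, S.phi α β = - S.phi β α)
    (hσrad : ∀ t : Fin n, ∀ β : Γ, S.phi (S.sg t) β = 0)
    (hσker : ∀ t : Fin n, ∀ p : Fin (2 * n + 2),
      p.1 ≠ 2 * t.1 + 2 → p.1 ≠ 2 * t.1 + 3 → S.phiv p (S.sg t) = 0)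
    (hεrad : ∀ β : Γ, S.phi S.eps β = 0)
    (hεker : ∀ p : Fin (2 * n + 2), p.1 ≠ 0 → S.phiv p S.eps = 0)
    (hε1 : S.phiv ⟨0, by omega⟩ S.eps = 1) :
    (∀ u v : S.A, S.brk u v = - S.brk v u) ∧
    (∀ u v w : S.A,
      S.brk (S.brk u v) w + S.brk (S.brk v w) u + S.brk (S.brk w u) v = 0) := by
  have hc : ∀ z : S.A, S.xx S.eps 0 * (S.xx (-S.eps) 0 * z) = z := by
    intro z
    rw [← mul_assoc, Setup.xx_mul, add_neg_cancel, add_zero, Setup.xx_zero, one_mul]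
  constructor
  · intro u v
    rw [S.brk_eq hskew hεrad hεker hε1 u v, S.brk_eq hskew hεrad hεker hε1 v u,
      S.Mb_skew hskew (S.xx S.eps 0 * u) (S.xx S.eps 0 * v), mul_neg]
  · intro u v w
    have e1 : S.brk (S.brk u v) w = S.xx (-S.eps) 0 *
        S.Mb (S.Mb (S.xx S.eps 0 * u) (S.xx S.eps 0 * v)) (S.xx S.eps 0 * w) := by
      rw [S.brk_eq hskew hεrad hεker hε1 (S.brk u v) w,
        S.brk_eq hskew hεrad hεker hε1 u v, hc]
    have e2 : S.brk (S.brk v w) u = S.xx (-S.eps) 0 *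
        S.Mb (S.Mb (S.xx S.eps 0 * v) (S.xx S.eps 0 * w)) (S.xx S.eps 0 * u) := by
      rw [S.brk_eq hskew hεrad hεker hε1 (S.brk v w) u,
        S.brk_eq hskew hεrad hεker hε1 v w, hc]
    have e3 : S.brk (S.brk w u) v = S.xx (-S.eps) 0 *
        S.Mb (S.Mb (S.xx S.eps 0 * w) (S.xx S.eps 0 * u)) (S.xx S.eps 0 * v) := by
      rw [S.brk_eq hskew hεrad hεker hε1 (S.brk w u) v,
        S.brk_eq hskew hεrad hεker hε1 w u, hc]
    rw [e1, e2, e3, ← mul_add, ← mul_add,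
      S.Mb_jac hskew hσrad hσker hεrad hεker (S.xx S.eps 0 * u) (S.xx S.eps 0 * v)
        (S.xx S.eps 0 * w), mul_zero]

end TwistedHamiltonian
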